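/- arXiv:2003.10496 — 3 statements merged into one kernel-verified Lean document; each statement's English description precedes it below -/
import Mathlib

section
/- Let B : ℝ^n → ℝ be continuously differentiable and let x : ℝ → ℝ^n be a solution of ẋ = f(x) with f locally Lipschitz. Suppose there exists an extended class-K function α (continuous, strictly increasing, α(0)=0) such that ⟨∇B(x), f(x)⟩ + α(B(x)) ≥ 0 for all x. If B(x(0)) ≥ 0, then B(x(t)) ≥ 0 for all t ≥ 0 in the interval of existence of the solution. -/
open scoped RealInnerProductSpace

/-- Barrier-certificate forward invariance: if B is C¹, f locally Lipschitz,
and ⟨∇B(x), f(x)⟩ + α(B(x)) ≥ 0 for an extended class-K function α,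
then B(x(0)) ≥ 0 implies B(x(t)) ≥ 0 for all t ≥ 0. -/
theorem barrier_forward_invariance
    (n : ℕ) (f : EuclideanSpace ℝ (Fin n) → EuclideanSpace ℝ (Fin n))
    (B : EuclideanSpace ℝ (Fin n) → ℝ) (x : ℝ → EuclideanSpace ℝ (Fin n))
    (α : ℝ → ℝ)
    (hB : ContDiff ℝ 1 B)
    (hf : LocallyLipschitz f)
    (hsol : ∀ t ∈ Set.Ici (0 : ℝ), HasDerivAt x (f (x t)) t)
    (hα_cont : Continuous α) (hα_mono : StrictMono α) (hα_zero : α 0 = 0)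
    (hineq : ∀ y, ⟪gradient B y, f y⟫ + α (B y) ≥ 0)
    (h0 : B (x 0) ≥ 0) :
    ∀ t ≥ (0 : ℝ), B (x t) ≥ 0 := by
  intro t1 ht1
  by_contra hneg
  push_neg at hneg
  set g : ℝ → ℝ := fun t => B (x t) with hg
  have hcont_x : ContinuousOn x (Set.Ici 0) := fun t ht =>
    ((hsol t ht).continuousAt).continuousWithinAt
  have hcont : ContinuousOn g (Set.Ici 0) :=
    hB.continuous.comp_continuousOn hcont_x
  have hderiv : ∀ t ∈ Set.Ici (0:ℝ),
      HasDerivAt g ((fderiv ℝ B (x t)) (f (x t))) t := by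
    intro t ht
    exact (((hB.differentiable one_ne_zero) (x t)).hasFDerivAt).comp_hasDerivAt t (hsol t ht)
  have key : ∀ y, (fderiv ℝ B y) (f y) + α (B y) ≥ 0 := by
    intro y
    have := hineq y
    rwa [gradient, InnerProductSpace.toDual_symm_apply] at this
  have ht1pos : 0 < t1 := by
    rcases lt_or_eq_of_le ht1 with h | h
    · exact h
    · exact absurd h0 (by rw [← h] at hneg; exact not_le.mpr hneg)
  set S : Set ℝ := Set.Icc 0 t1 ∩ g ⁻¹' Set.Ici 0 with hS
  have hS0 : (0:ℝ) ∈ S := ⟨⟨le_rfl, le_of_lt ht1pos⟩, h0⟩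
  have hSsub : S ⊆ Set.Icc 0 t1 := Set.inter_subset_left
  have hSclosed : IsClosed S := by
    have := (hcont.mono (Set.Icc_subset_Ici_self : Set.Icc (0:ℝ) t1 ⊆ Set.Ici 0))
    exact this.preimage_isClosed_of_isClosed isClosed_Icc isClosed_Ici
  have hScomp : IsCompact S := isCompact_Icc.of_isClosed_subset hSclosed hSsub
  set τ : ℝ := sSup S with hτ
  have hτS : τ ∈ S := hScomp.sSup_mem ⟨0, hS0⟩
  have hτ0 : 0 ≤ τ := hτS.1.1
  have hτt1 : τ ≤ t1 := hτS.1.2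
  have hgτ : 0 ≤ g τ := hτS.2
  have hτlt : τ < t1 := by
    rcases lt_or_eq_of_le hτt1 with h | h
    · exact h
    · exact absurd hgτ (by rw [h]; exact not_le.mpr hneg)
  have hgneg : ∀ t ∈ Set.Ioc τ t1, g t < 0 := by
    intro t ht
    by_contra h
    push_neg at h
    have htS : t ∈ S := ⟨⟨le_trans hτ0 (le_of_lt ht.1), ht.2⟩, h⟩
    have : t ≤ τ := le_csSup hScomp.bddAbove htS
    exact absurd ht.1 (not_lt.mpr this)
  have hmono : MonotoneOn g (Set.Icc τ t1) := by
    apply monotoneOn_of_deriv_nonneg (convex_Icc τ t1)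
    · exact hcont.mono (fun t ht => le_trans hτ0 ht.1)
    · rw [interior_Icc]
      intro t ht
      exact ((hderiv t (le_trans hτ0 (le_of_lt ht.1))).differentiableAt).differentiableWithinAt
    · rw [interior_Icc]
      intro t ht
      have hd := (hderiv t (le_trans hτ0 (le_of_lt ht.1))).deriv
      rw [hd]
      have hgt : g t < 0 := hgneg t ⟨ht.1, le_of_lt ht.2⟩
      have hα : α (g t) < 0 := by
        calc α (g t) < α 0 := hα_mono hgt
        _ = 0 := hα_zero
      have := key (x t)
      linarith
  have : g τ ≤ g t1 :=
    hmono ⟨le_rfl, hτt1⟩ ⟨hτt1, le_rfl⟩ hτt1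
  linarith
end

section
/- Combining the previous two facts: if B : ℝ^n → ℝ is C¹ with B ≥ 0 on ℝ^n \ X_u, B < 0 on X_u, and ⟨∇B(x), f(x)⟩ + α(B(x)) ≥ 0 for all x for some extended class-K function α, then every solution of ẋ = f(x) with B(x(0)) ≥ 0 satisfies x(t) ∉ X_u for all t ≥ 0. -/
open scoped RealInnerProductSpace

/-- Full barrier-certificate safety theorem: a C¹ barrier function B that is
nonnegative outside the unsafe set, negative on the unsafe set, and satisfies
⟨∇B, f⟩ + α(B) ≥ 0 for an extended class-K function α, guarantees that every
solution of ẋ = f(x) starting in {B ≥ 0} never enters the unsafe set. -/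
theorem barrier_certificate_safety
    (n : ℕ) (f : EuclideanSpace ℝ (Fin n) → EuclideanSpace ℝ (Fin n))
    (B : EuclideanSpace ℝ (Fin n) → ℝ)
    (Xu : Set (EuclideanSpace ℝ (Fin n)))
    (x : ℝ → EuclideanSpace ℝ (Fin n))
    (α : ℝ → ℝ)
    (hB : ContDiff ℝ 1 B)
    (hf : LocallyLipschitz f) (hf0 : f 0 = 0)
    (hout : ∀ y ∉ Xu, B y ≥ 0)
    (hin : ∀ y ∈ Xu, B y < 0)
    (hα_cont : Continuous α) (hα_mono : StrictMono α) (hα_zero : α 0 = 0)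
    (hineq : ∀ y, ⟪gradient B y, f y⟫ + α (B y) ≥ 0)
    (hsol : ∀ t ∈ Set.Ici (0 : ℝ), HasDerivAt x (f (x t)) t)
    (h0 : B (x 0) ≥ 0) :
    ∀ t ≥ (0 : ℝ), x t ∉ Xu := by
  -- derivative of g := B ∘ x
  set g : ℝ → ℝ := fun t => B (x t) with hg
  have hderiv : ∀ t ∈ Set.Ici (0 : ℝ),
      HasDerivAt g (⟪gradient B (x t), f (x t)⟫) t := by
    intro t ht
    have hgrad : HasGradientAt B (gradient B (x t)) (x t) :=
      ((hB.differentiable one_ne_zero) (x t)).hasGradientAt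
    have hF : HasFDerivAt B
        ((InnerProductSpace.toDualMap ℝ _) (gradient B (x t)) : _ →L[ℝ] ℝ) (x t) := hgrad
    have := hF.comp_hasDerivAt t (hsol t ht)
    exact this
  intro s hs hmem
  have hgs : g s < 0 := hin _ hmem
  have hg0 : g 0 ≥ 0 := h0
  -- continuity of g on [0, s]
  have hcont : ContinuousOn g (Set.Icc 0 s) := by
    intro t ht
    exact ((hderiv t ht.1).continuousAt).continuousWithinAt
  -- the set where g ≥ 0
  set S : Set ℝ := {t ∈ Set.Icc 0 s | g t ≥ 0} with hS
  have hSne : S.Nonempty := ⟨0, ⟨le_refl 0, hs⟩, hg0⟩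
  have hScl : IsClosed S := by
    have : S = Set.Icc 0 s ∩ g ⁻¹' Set.Ici 0 := by
      ext t; simp [hS, Set.mem_setOf_eq, and_comm, ge_iff_le]
    rw [this]
    exact (hcont.preimage_isClosed_of_isClosed isClosed_Icc isClosed_Ici)
  have hScompact : IsCompact S := (isCompact_Icc.of_isClosed_subset hScl
    (fun t ht => ht.1))
  set T : ℝ := sSup S with hT
  have hTS : T ∈ S := hScompact.sSup_mem hSne
  have hT0 : 0 ≤ T := hTS.1.1
  have hTs : T ≤ s := hTS.1.2
  have hgT : g T ≥ 0 := hTS.2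
  have hTne : T ≠ s := by
    intro h; rw [h] at hgT; linarith
  have hTlt : T < s := lt_of_le_of_ne hTs hTne
  -- g < 0 on (T, s]
  have hneg : ∀ t, T < t → t ≤ s → g t < 0 := by
    intro t h1 h2
    by_contra h
    push_neg at h
    have : t ∈ S := ⟨⟨le_trans hT0 h1.le, h2⟩, h⟩
    have := le_csSup hScompact.bddAbove this
    linarith
  -- g strictly increasing on [T, s]
  have hmono : StrictMonoOn g (Set.Icc T s) := by
    apply strictMonoOn_of_deriv_pos (convex_Icc T s)
    · exact hcont.mono (Set.Icc_subset_Icc hT0 le_rfl)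
    · intro t ht
      rw [interior_Icc] at ht
      have ht0 : t ∈ Set.Ici (0:ℝ) := le_trans hT0 ht.1.le
      have hd := hderiv t ht0
      rw [hd.deriv]
      have hgt : g t < 0 := hneg t ht.1 ht.2.le
      have : α (g t) < 0 := by
        have := hα_mono hgt
        rwa [hα_zero] at this
      have := hineq (x t)
      simp only [hg] at *
      linarith
  have := hmono ⟨le_rfl, hTs⟩ ⟨hTs, le_rfl⟩ hTlt
  linarith
end

section
/- Let B : ℝ^n → ℝ be C¹, g : ℝ^n → ℝ^{n×r} continuous, and f, h continuous with the dynamics ẋ = f(x) + g(x)u + h(x, y) where y ranges over a compact set D'. Suppose |g(x)ᵀ∇B(x)| > 0 for all x on the compact boundary set ∂D[c] = {x : B(x) = c}. Then there exists β ≥ 0 such that the feedback u(x) = β g(x)ᵀ∇B(x) satisfies ⟨∇B(x), f(x) + g(x)u(x) + h(x,y)⟩ ≥ 0 for all x ∈ ∂D[c] and all y ∈ D'. -/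
open scoped RealInnerProductSpace

/-- Proposition 1: existence of a safe feedback. If |gᵀ∇B| > 0 on the compact
boundary set ∂D[c] = {B = c}, then there is β ≥ 0 such that
u(x) = β gᵀ(x)∇B(x) makes ⟨∇B, f + g u + h(·,y)⟩ ≥ 0 on ∂D[c] for all
disturbances y in a compact set D'. Here the j-th column of g is `g x j`,
and g(x)u = ∑ j, u j • g x j. -/
theorem safe_feedback_exists
    (n r p : ℕ)
    (B : EuclideanSpace ℝ (Fin n) → ℝ)
    (f : EuclideanSpace ℝ (Fin n) → EuclideanSpace ℝ (Fin n))
    (g : EuclideanSpace ℝ (Fin n) → Fin r → EuclideanSpace ℝ (Fin n))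
    (h : EuclideanSpace ℝ (Fin n) → EuclideanSpace ℝ (Fin p) → EuclideanSpace ℝ (Fin n))
    (D' : Set (EuclideanSpace ℝ (Fin p))) (c : ℝ)
    (hB : ContDiff ℝ 1 B)
    (hf : Continuous f)
    (hg : Continuous g)
    (hh : Continuous fun q : EuclideanSpace ℝ (Fin n) × EuclideanSpace ℝ (Fin p) => h q.1 q.2)
    (hD' : IsCompact D')
    (hbdry_compact : IsCompact {x | B x = c})
    (hgB : ∀ x, B x = c → (fun j => ⟪g x j, gradient B x⟫) ≠ (0 : Fin r → ℝ)) :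
    ∃ β : ℝ, 0 ≤ β ∧ ∀ x, B x = c → ∀ y ∈ D',
      ⟪gradient B x,
        f x + (∑ j : Fin r, (β * ⟪g x j, gradient B x⟫) • g x j) + h x y⟫ ≥ 0 := by
  -- continuity of the gradient
  have hgrad : Continuous (gradient B) := by
    have h1 : Continuous (fderiv ℝ B) := hB.continuous_fderiv one_ne_zero
    exact (InnerProductSpace.toDual ℝ
      (EuclideanSpace ℝ (Fin n))).symm.continuous.comp h1
  -- S x = ∑ j ⟪g x j, ∇B x⟫², positive on the boundary
  set S : EuclideanSpace ℝ (Fin n) → ℝ :=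
    fun x => ∑ j : Fin r, ⟪g x j, gradient B x⟫ ^ 2 with hS
  have hScont : Continuous S := by
    apply continuous_finset_sum
    intro j _
    exact (((continuous_apply j).comp hg).inner hgrad).pow 2
  have hSpos : ∀ x, B x = c → 0 < S x := by
    intro x hx
    have hne := hgB x hx
    have : ∃ j, ⟪g x j, gradient B x⟫ ≠ 0 := by
      by_contra hc
      push_neg at hc
      exact hne (funext hc)
    obtain ⟨j, hj⟩ := this
    have : 0 < ⟪g x j, gradient B x⟫ ^ 2 := by positivity
    refine lt_of_lt_of_le this ?_
    apply Finset.single_le_sum (f := fun j => ⟪g x j, gradient B x⟫ ^ 2)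
      (fun i _ => by positivity) (Finset.mem_univ j)
  -- the function to maximize
  set F : EuclideanSpace ℝ (Fin n) × EuclideanSpace ℝ (Fin p) → ℝ :=
    fun q => (-⟪gradient B q.1, f q.1 + h q.1 q.2⟫) / S q.1 with hF
  set K := ({x | B x = c} ×ˢ D' :
    Set (EuclideanSpace ℝ (Fin n) × EuclideanSpace ℝ (Fin p))) with hK
  have hKc : IsCompact K := hbdry_compact.prod hD'
  have hFcont : ContinuousOn F K := by
    apply ContinuousOn.div
    · exact (((hgrad.comp continuous_fst).inner
        ((hf.comp continuous_fst).add hh)).neg).continuousOn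
    · exact (hScont.comp continuous_fst).continuousOn
    · intro q hq
      exact (hSpos q.1 hq.1).ne'
  -- choose β
  by_cases hKe : K.Nonempty
  · obtain ⟨q0, hq0, hmax⟩ := hKc.exists_isMaxOn hKe hFcont
    refine ⟨max (F q0) 0, le_max_right _ _, ?_⟩
    intro x hx y hy
    set v := gradient B x with hv
    have hSx := hSpos x hx
    have hFle : F (x, y) ≤ max (F q0) 0 :=
      le_trans (hmax ⟨hx, hy⟩) (le_max_left _ _)
    have key : -⟪v, f x + h x y⟫ ≤ max (F q0) 0 * S x := by
      have := (div_le_iff₀ hSx).mp hFle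
      exact this
    have hw : ⟪v, ∑ j : Fin r, ((max (F q0) 0) * ⟪g x j, v⟫) • g x j⟫
        = max (F q0) 0 * S x := by
      rw [inner_sum]
      simp only [real_inner_smul_right]
      rw [hS, Finset.mul_sum]
      congr 1
      ext j
      rw [real_inner_comm (g x j) v]
      ring
    have : ⟪v, f x + (∑ j : Fin r, ((max (F q0) 0) * ⟪g x j, v⟫) • g x j) + h x y⟫
        = ⟪v, f x + h x y⟫ + max (F q0) 0 * S x := by
      rw [inner_add_right, inner_add_right, inner_add_right, hw]
      ring
    rw [ge_iff_le, this]
    linarith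
  · refine ⟨0, le_refl 0, ?_⟩
    intro x hx y hy
    exact absurd ⟨hx, hy⟩ (fun hm => hKe ⟨(x, y), hm⟩)
end
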